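/- arXiv:2505.24311 — 2 statements merged into one kernel-verified Lean document; each statement's English description precedes it below -/
import Mathlib

section
/- Under the same hypotheses (w continuous increasing with exp(−w(‖·‖^θ)) integrable, f bounded continuous with f(x) > 0), for each x: ∫_{ℝ^d} exp(−w(σ‖x−x'‖^θ)) f(x') dx' = Z_d σ^{−d/θ} (f(x) + ε(σ)) where ε(σ) → 0 as σ → ∞. Consequently, −log(∫ exp(−w(σ‖x−x'‖^θ)) f(x') dx') = (d/θ) log σ − log(Z_d) − log f(x) + o(1) as σ → ∞. -/
open MeasureTheory Filter

set_option maxHeartbeats 1000000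

/-- Asymptotics of the smoothed density: with `Z_d = ∫ exp(-w(‖τ‖^θ)) dτ`,
`∫ exp(-w(σ‖x-x'‖^θ)) f(x') dx' = Z_d σ^{-d/θ} (f(x) + ε(σ))` with `ε(σ) → 0`,
and consequently
`-log ∫ exp(-w(σ‖x-x'‖^θ)) f(x') dx' = (d/θ) log σ - log Z_d - log f(x) + o(1)`. -/
theorem smoothed_density_asymptotics
    (d : ℕ) (hd : 1 ≤ d) (θ : ℝ) (hθ : 0 < θ)
    (w : ℝ → ℝ) (hwc : Continuous w)
    (hwnn : ∀ t ≥ (0:ℝ), 0 ≤ w t)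
    (hmono : MonotoneOn w (Set.Ici (0:ℝ)))
    (hlim : Tendsto w atTop atTop)
    (hint : Integrable (fun τ : EuclideanSpace ℝ (Fin d) => Real.exp (-(w (‖τ‖ ^ θ)))))
    (f : EuclideanSpace ℝ (Fin d) → ℝ) (hfc : Continuous f)
    (hfb : ∃ M, ∀ x, |f x| ≤ M)
    (x : EuclideanSpace ℝ (Fin d)) (hfx : 0 < f x) :
    (∃ ε : ℝ → ℝ, Tendsto ε atTop (nhds 0) ∧
      ∀ σ > (0:ℝ),
        (∫ x' : EuclideanSpace ℝ (Fin d), Real.exp (-(w (σ * ‖x - x'‖ ^ θ))) * f x') =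
          (∫ τ : EuclideanSpace ℝ (Fin d), Real.exp (-(w (‖τ‖ ^ θ)))) *
            σ ^ (-(d:ℝ)/θ) * (f x + ε σ)) ∧
    Tendsto (fun σ : ℝ =>
        (-(Real.log (∫ x' : EuclideanSpace ℝ (Fin d),
            Real.exp (-(w (σ * ‖x - x'‖ ^ θ))) * f x'))) -
          ((d/θ) * Real.log σ
            - Real.log (∫ τ : EuclideanSpace ℝ (Fin d), Real.exp (-(w (‖τ‖ ^ θ))))
            - Real.log (f x)))
      atTop (nhds 0) := by
  obtain ⟨M, hM⟩ := hfb
  set Z : ℝ := ∫ τ : EuclideanSpace ℝ (Fin d), Real.exp (-(w (‖τ‖ ^ θ))) with hZ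
  -- positivity of Z
  have hZpos : 0 < Z := by
    rw [hZ, integral_pos_iff_support_of_nonneg (fun τ => (Real.exp_pos _).le) hint]
    have hs : (Function.support fun τ : EuclideanSpace ℝ (Fin d) => Real.exp (-(w (‖τ‖ ^ θ)))) = Set.univ := by
      ext τ; simp [Function.mem_support, (Real.exp_pos _).ne']
    rw [hs]
    exact isOpen_univ.measure_pos _ Set.univ_nonempty
  -- the rescaled integral
  set g : ℝ → ℝ := fun σ =>
    ∫ τ : EuclideanSpace ℝ (Fin d), Real.exp (-(w (‖τ‖ ^ θ))) * f (x - (σ ^ (-θ⁻¹ : ℝ)) • τ) with hg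
  -- key change of variables
  have key : ∀ σ > (0:ℝ),
      (∫ x' : EuclideanSpace ℝ (Fin d), Real.exp (-(w (σ * ‖x - x'‖ ^ θ))) * f x') = σ ^ (-(d:ℝ)/θ) * g σ := by
    intro σ hσ
    set c : ℝ := σ ^ (-θ⁻¹ : ℝ) with hc
    have hcpos : 0 < c := Real.rpow_pos_of_pos hσ _
    set F : EuclideanSpace ℝ (Fin d) → ℝ := fun y => Real.exp (-(w (σ * ‖y‖ ^ θ))) * f (x - y) with hF
    have step1 : (∫ x' : EuclideanSpace ℝ (Fin d), Real.exp (-(w (σ * ‖x - x'‖ ^ θ))) * f x') = ∫ y : EuclideanSpace ℝ (Fin d), F y := by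
      rw [← integral_sub_left_eq_self F volume x]
      apply integral_congr_ae
      filter_upwards with x'
      rw [hF]; simp [sub_sub_cancel]
    have step2 : (∫ τ : EuclideanSpace ℝ (Fin d), F (c • τ)) = |(c ^ (Module.finrank ℝ (EuclideanSpace ℝ (Fin d))))⁻¹| • ∫ y : EuclideanSpace ℝ (Fin d), F y :=
      Measure.integral_comp_smul volume F c
    have hfr : Module.finrank ℝ (EuclideanSpace ℝ (Fin d)) = d := finrank_euclideanSpace_fin
    have hcd : c ^ d = σ ^ (-(d:ℝ)/θ) := by
      rw [hc, ← Real.rpow_natCast (σ ^ (-θ⁻¹ : ℝ)) d, ← Real.rpow_mul hσ.le]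
      congr 1; field_simp
    have hnorm : ∀ τ : EuclideanSpace ℝ (Fin d), σ * ‖c • τ‖ ^ θ = ‖τ‖ ^ θ := by
      intro τ
      rw [norm_smul, Real.norm_eq_abs, abs_of_pos hcpos,
        Real.mul_rpow hcpos.le (norm_nonneg _), hc, ← Real.rpow_mul hσ.le,
        show -θ⁻¹ * θ = -1 by field_simp, Real.rpow_neg_one, ← mul_assoc,
        mul_inv_cancel₀ hσ.ne', one_mul]
    have step3 : ∀ τ : EuclideanSpace ℝ (Fin d), F (c • τ) = Real.exp (-(w (‖τ‖ ^ θ))) * f (x - c • τ) := by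
      intro τ
      simp only [hF]
      rw [hnorm τ]
    have hgσ : g σ = (c ^ d)⁻¹ * ∫ y : EuclideanSpace ℝ (Fin d), F y := by
      have h4 : g σ = ∫ τ : EuclideanSpace ℝ (Fin d), F (c • τ) := by
        rw [hg]
        apply integral_congr_ae
        filter_upwards with τ
        rw [step3 τ, ← hc]
      rw [h4, step2, hfr, smul_eq_mul, abs_of_pos (by positivity)]
    rw [step1, hgσ, hcd]
    have : (σ : ℝ) ^ (-(d:ℝ)/θ) ≠ 0 := (Real.rpow_pos_of_pos hσ _).ne'
    field_simp
  -- dominated convergence: g σ → Z * f x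
  have hglim : Tendsto g atTop (nhds (Z * f x)) := by
    have hZfx : Z * f x = ∫ τ : EuclideanSpace ℝ (Fin d), Real.exp (-(w (‖τ‖ ^ θ))) * f x := by
      rw [hZ, ← integral_mul_const]
    rw [hZfx]
    apply tendsto_integral_filter_of_dominated_convergence
      (fun τ : EuclideanSpace ℝ (Fin d) => Real.exp (-(w (‖τ‖ ^ θ))) * M)
    · filter_upwards with σ
      apply Continuous.aestronglyMeasurable
      have h1 : Continuous fun τ : EuclideanSpace ℝ (Fin d) => Real.exp (-(w (‖τ‖ ^ θ))) :=
        (Real.continuous_exp.comp ((hwc.comp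
          (continuous_norm.rpow_const (fun _ => Or.inr hθ.le))).neg))
      exact h1.mul (hfc.comp (continuous_const.sub (continuous_const_smul _)))
    · filter_upwards with σ
      filter_upwards with τ
      rw [Real.norm_eq_abs, abs_mul, abs_of_pos (Real.exp_pos _)]
      exact mul_le_mul_of_nonneg_left (hM _) (Real.exp_pos _).le
    · exact hint.mul_const M
    · filter_upwards with τ
      apply Tendsto.const_mul
      have h0 : Tendsto (fun σ : ℝ => (σ ^ (-θ⁻¹ : ℝ)) • τ) atTop (nhds ((0:ℝ) • τ)) := by
        apply Tendsto.smul_const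
        exact tendsto_rpow_neg_atTop (by positivity)
      rw [zero_smul] at h0
      have h1 : Tendsto (fun σ : ℝ => x - (σ ^ (-θ⁻¹ : ℝ)) • τ) atTop (nhds (x - 0)) :=
        tendsto_const_nhds.sub h0
      rw [sub_zero] at h1
      exact (hfc.tendsto x).comp h1
  -- the ε function
  set ε : ℝ → ℝ := fun σ => g σ / Z - f x with hε
  have hεlim : Tendsto ε atTop (nhds 0) := by
    have : Tendsto (fun σ => g σ / Z - f x) atTop (nhds ((Z * f x) / Z - f x)) :=
      (hglim.div_const Z).sub tendsto_const_nhds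
    rwa [mul_comm Z (f x), mul_div_assoc, div_self hZpos.ne', mul_one, sub_self] at this
  have heq : ∀ σ > (0:ℝ),
      (∫ x' : EuclideanSpace ℝ (Fin d), Real.exp (-(w (σ * ‖x - x'‖ ^ θ))) * f x') =
        Z * σ ^ (-(d:ℝ)/θ) * (f x + ε σ) := by
    intro σ hσ
    rw [key σ hσ, hε]
    simp only
    field_simp
    ring
  refine ⟨⟨ε, hεlim, heq⟩, ?_⟩
  -- the log asymptotics
  have hev : ∀ᶠ σ : ℝ in atTop, 0 < f x + ε σ := by
    have : Tendsto (fun σ => f x + ε σ) atTop (nhds (f x + 0)) :=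
      tendsto_const_nhds.add hεlim
    rw [add_zero] at this
    exact this.eventually (eventually_gt_nhds hfx)
  have hloglim : Tendsto (fun σ : ℝ => Real.log (f x) - Real.log (f x + ε σ))
      atTop (nhds 0) := by
    have h1 : Tendsto (fun σ => f x + ε σ) atTop (nhds (f x)) := by
      have := (tendsto_const_nhds (x := f x)).add hεlim
      rwa [add_zero] at this
    have h2 : Tendsto (fun σ : ℝ => Real.log (f x + ε σ)) atTop (nhds (Real.log (f x))) :=
      (Real.continuousAt_log hfx.ne').tendsto.comp h1
    have := (tendsto_const_nhds (x := Real.log (f x))).sub h2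
    rwa [sub_self] at this
  apply hloglim.congr'
  filter_upwards [eventually_gt_atTop (0:ℝ), hev] with σ hσ hfε
  rw [heq σ hσ]
  rw [Real.log_mul (by positivity) hfε.ne', Real.log_mul hZpos.ne'
    (Real.rpow_pos_of_pos hσ _).ne', Real.log_rpow hσ]
  push_cast
  ring
end

section
/- Let μ be a probability measure on ℝ^d with bounded continuous density f, f(x) > 0, and let K(x,x',σ) = exp(−w(σ‖x−x'‖^θ)) with w satisfying the input kernel conditions (w increasing, w → ∞, w'(t)+t·w''(t) ≥ 0, ∫₀^∞ t^{d-1} w(t^θ) e^{−w(t^θ)} dt < ∞). Define F(x,σ) = ∫ [K/∫K dμ] · log[K/∫K dμ] dμ(x') + log ρ for ρ ∈ (0,1). Then there exists a constant C > 0 such that F(x,σ) ≥ C log σ − log f(x) + log ρ for σ sufficiently large. -/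
open MeasureTheory Filter

/-- The generalized input kernel `K(x,x',σ) = exp(-w(σ‖x-x'‖^θ))`. -/
noncomputable def inputKernel {d : ℕ} (w : ℝ → ℝ) (θ : ℝ)
    (x x' : EuclideanSpace ℝ (Fin d)) (σ : ℝ) : ℝ :=
  Real.exp (-(w (σ * ‖x - x'‖ ^ θ)))

/-- The continuum entropy functional
`F(x,σ) = ∫ (K/∫K dμ) log (K/∫K dμ) dμ(x') + log ρ`. -/
noncomputable def entropyF {d : ℕ} (w : ℝ → ℝ) (θ ρ : ℝ)
    (μ : Measure (EuclideanSpace ℝ (Fin d)))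
    (x : EuclideanSpace ℝ (Fin d)) (σ : ℝ) : ℝ :=
  (∫ x', (inputKernel w θ x x' σ / ∫ x'', inputKernel w θ x x'' σ ∂μ) *
      Real.log (inputKernel w θ x x' σ / ∫ x'', inputKernel w θ x x'' σ ∂μ) ∂μ)
    + Real.log ρ

open Set Metric

lemma integrable_radial (d : ℕ) (hd : 1 ≤ d) (g : ℝ → ℝ)
    (hgint : IntegrableOn (fun r => r ^ (d - 1) * g r) (Set.Ioi 0)) :
    Integrable (fun y : EuclideanSpace ℝ (Fin d) => g ‖y‖) := by
  haveI : Nonempty (Fin d) := ⟨⟨0, hd⟩⟩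
  haveI : Nontrivial (EuclideanSpace ℝ (Fin d)) := inferInstance
  set E := EuclideanSpace ℝ (Fin d)
  have hemb : MeasurableEmbedding (Subtype.val : Set.Ioi (0:ℝ) → ℝ) :=
    MeasurableEmbedding.subtype_coe measurableSet_Ioi
  have hmc : Measure.map (Subtype.val : Set.Ioi (0:ℝ) → ℝ)
      (Measure.comap Subtype.val volume) = volume.restrict (Set.Ioi 0) := by
    rw [hemb.map_comap, Subtype.range_coe]
  -- Step 1: integrability on the subtype `Ioi 0` w.r.t. `volumeIoiPow (d-1)`
  have h1 : Integrable (fun r : Set.Ioi (0:ℝ) => g r.1) (Measure.volumeIoiPow (d - 1)) := by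
    rw [Measure.volumeIoiPow]
    rw [integrable_withDensity_iff (by fun_prop)
      (Eventually.of_forall fun _ => ENNReal.ofReal_lt_top)]
    have h2 : Integrable ((fun r : ℝ => r ^ (d - 1) * g r) ∘ (Subtype.val : Set.Ioi (0:ℝ) → ℝ))
        (Measure.comap Subtype.val volume) := by
      apply hemb.integrable_map_iff.1
      rw [hmc]; exact hgint
    have heq : (fun r : Set.Ioi (0:ℝ) => g r.1 * (ENNReal.ofReal (r.1 ^ (d - 1))).toReal)
        = ((fun r : ℝ => r ^ (d - 1) * g r) ∘ (Subtype.val : Set.Ioi (0:ℝ) → ℝ)) := by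
      funext r
      simp only [Function.comp_apply]
      rw [ENNReal.toReal_ofReal (pow_nonneg r.2.out.le _), mul_comm]
    rw [heq]; exact h2
  -- Step 2: integrability on the product sphere × Ioi 0
  have h2 : Integrable (fun z : sphere (0:E) 1 × Set.Ioi (0:ℝ) => g z.2.1)
      ((volume : Measure E).toSphere.prod (Measure.volumeIoiPow (d - 1))) := by
    have := (integrable_const (1:ℝ) (μ := (volume : Measure E).toSphere)).smul_prod h1
    simpa using this
  have hfr : Module.finrank ℝ E = d := finrank_euclideanSpace_fin
  -- Step 3: transfer along the homeomorphism
  have h3 : Integrable ((fun z : sphere (0:E) 1 × Set.Ioi (0:ℝ) => g z.2.1) ∘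
      (homeomorphUnitSphereProd E)) (Measure.comap Subtype.val volume) := by
    refine ((Measure.measurePreserving_homeomorphUnitSphereProd
      (volume : Measure E)).integrable_comp_emb (Homeomorph.measurableEmbedding _)).2 ?_
    rw [hfr]; exact h2
  have h4 : Integrable ((fun y : E => g ‖y‖) ∘ (Subtype.val : ({0}ᶜ : Set E) → E))
      (Measure.comap Subtype.val volume) := by
    convert h3 using 1; funext y; simp
  rw [← restrict_compl_singleton (0 : E) (μ := (volume : Measure E)),
    ← Subtype.range_coe (s := ({0}ᶜ : Set E)),
    ← (MeasurableEmbedding.subtype_coe (measurableSet_singleton (0:E)).compl).map_comap,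
    (MeasurableEmbedding.subtype_coe (measurableSet_singleton (0:E)).compl).integrable_map_iff]
  exact h4

lemma polar_eq (d : ℕ) (hd : 1 ≤ d) (g : ℝ → ℝ) :
    ∫ y : EuclideanSpace ℝ (Fin d), g ‖y‖ =
      (d : ℝ) * (volume (ball (0 : EuclideanSpace ℝ (Fin d)) 1)).toReal *
        ∫ r in Set.Ioi (0:ℝ), r ^ (d - 1) * g r := by
  haveI : Nonempty (Fin d) := ⟨⟨0, hd⟩⟩
  haveI : Nontrivial (EuclideanSpace ℝ (Fin d)) := inferInstance
  rw [integral_fun_norm_addHaar (volume : Measure (EuclideanSpace ℝ (Fin d))) g]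
  simp only [finrank_euclideanSpace_fin, nsmul_eq_mul, smul_eq_mul, mul_assoc]
  rfl

lemma radial_subst_aux {θ σ : ℝ} (hθ : 0 < θ) (hσ : 0 < σ) :
    σ * (σ ^ (-θ⁻¹)) ^ θ = 1 := by
  rw [← Real.rpow_mul hσ.le, neg_mul, inv_mul_cancel₀ hθ.ne', Real.rpow_neg_one,
    mul_inv_cancel₀ hσ.ne']

lemma radial_subst_pow {d : ℕ} (hd : 1 ≤ d) {θ σ : ℝ} (hθ : 0 < θ) (hσ : 0 < σ) :
    σ ^ (-θ⁻¹) * (σ ^ (-θ⁻¹)) ^ (d - 1) = σ ^ (-((d:ℝ)/θ)) := by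
  rw [← pow_succ', Nat.sub_add_cancel hd, ← Real.rpow_natCast (σ ^ (-θ⁻¹)) d,
    ← Real.rpow_mul hσ.le]
  congr 1
  field_simp

lemma radial_subst (d : ℕ) (hd : 1 ≤ d) {θ σ : ℝ} (hθ : 0 < θ) (hσ : 0 < σ) (φ : ℝ → ℝ) :
    (∫ r in Set.Ioi (0:ℝ), r ^ (d - 1) * φ (σ * r ^ θ)) =
      σ ^ (-((d:ℝ)/θ)) * ∫ s in Set.Ioi (0:ℝ), s ^ (d - 1) * φ (s ^ θ) := by
  set c : ℝ := σ ^ (-θ⁻¹) with hc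
  have hc0 : 0 < c := Real.rpow_pos_of_pos hσ _
  have key := integral_comp_mul_left_Ioi (fun r => r ^ (d - 1) * φ (σ * r ^ θ)) 0 hc0
  simp only [mul_zero, smul_eq_mul] at key
  have hcongr : Set.EqOn (fun s : ℝ => (c * s) ^ (d - 1) * φ (σ * (c * s) ^ θ))
      (fun s : ℝ => c ^ (d - 1) * (s ^ (d - 1) * φ (s ^ θ))) (Set.Ioi 0) := by
    intro s hs
    have h1 : (c * s) ^ θ = c ^ θ * s ^ θ := Real.mul_rpow hc0.le (le_of_lt hs)
    have h2 : σ * (c * s) ^ θ = s ^ θ := by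
      rw [h1, ← mul_assoc, radial_subst_aux hθ hσ, one_mul]
    simp only
    rw [h2, mul_pow]; ring
  rw [setIntegral_congr_fun measurableSet_Ioi hcongr, integral_const_mul] at key
  have : (∫ r in Set.Ioi (0:ℝ), r ^ (d - 1) * φ (σ * r ^ θ)) =
      c * (c ^ (d - 1) * ∫ s in Set.Ioi (0:ℝ), s ^ (d - 1) * φ (s ^ θ)) := by
    rw [key, ← mul_assoc, mul_inv_cancel₀ hc0.ne', one_mul]
  rw [this, ← mul_assoc, radial_subst_pow hd hθ hσ]

lemma radial_subst_integrable (d : ℕ) {θ σ : ℝ} (hθ : 0 < θ) (hσ : 0 < σ) (φ : ℝ → ℝ)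
    (h : IntegrableOn (fun s => s ^ (d - 1) * φ (s ^ θ)) (Set.Ioi 0)) :
    IntegrableOn (fun r => r ^ (d - 1) * φ (σ * r ^ θ)) (Set.Ioi 0) := by
  set c : ℝ := σ ^ (-θ⁻¹) with hc
  have hc0 : 0 < c := Real.rpow_pos_of_pos hσ _
  have hiff := integrableOn_Ioi_comp_mul_left_iff (fun r => r ^ (d - 1) * φ (σ * r ^ θ)) 0 hc0
  rw [mul_zero] at hiff
  apply hiff.1
  apply IntegrableOn.congr_fun (h.const_mul (c ^ (d - 1))) _ measurableSet_Ioi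
  intro s hs
  have h1 : (c * s) ^ θ = c ^ θ * s ^ θ := Real.mul_rpow hc0.le (le_of_lt hs)
  have h2 : σ * (c * s) ^ θ = s ^ θ := by
    rw [h1, ← mul_assoc, radial_subst_aux hθ hσ, one_mul]
  simp only
  rw [h2, mul_pow]; ring


set_option maxHeartbeats 1000000 in
/-- Lower bound for the entropy functional: under the input kernel conditions there is
`C > 0` with `F(x,σ) ≥ C log σ - log f(x) + log ρ` for all sufficiently large `σ`. -/
theorem entropyF_lower_bound
    (d : ℕ) (hd : 2 ≤ d) (θ : ℝ) (hθ : 0 < θ) (ρ : ℝ) (hρ : ρ ∈ Set.Ioo (0:ℝ) 1)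
    (f : EuclideanSpace ℝ (Fin d) → ℝ) (hfc : Continuous f)
    (hfb : ∃ M, ∀ x, f x ≤ M) (hfpos : ∀ x, 0 < f x)
    (μ : Measure (EuclideanSpace ℝ (Fin d)))
    (hμ : μ = volume.withDensity (fun x => ENNReal.ofReal (f x)))
    (hprob : IsProbabilityMeasure μ)
    (w w' w'' : ℝ → ℝ)
    (hwnn : ∀ t ≥ (0:ℝ), 0 ≤ w t) (hw0 : w 0 = 0)
    (hder : ∀ t ≥ (0:ℝ), HasDerivAt w (w' t) t)
    (hder' : ∀ t ≥ (0:ℝ), HasDerivAt w' (w'' t) t)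
    (hw'pos : ∀ t ≥ (0:ℝ), 0 < w' t)
    (hwlim : Tendsto w atTop atTop)
    (hconv : ∀ t ≥ (0:ℝ), 0 ≤ w' t + t * w'' t)
    (hint : IntegrableOn
      (fun t => t ^ (d - 1) * w (t ^ θ) * Real.exp (-(w (t ^ θ)))) (Set.Ioi 0))
    (x : EuclideanSpace ℝ (Fin d)) :
    ∃ C > (0:ℝ), ∃ σ₀ : ℝ, ∀ σ ≥ σ₀,
      C * Real.log σ - Real.log (f x) + Real.log ρ ≤ entropyF w θ ρ μ x σ := by
  haveI := hprob
  obtain ⟨hρ0, hρ1⟩ := hρ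
  obtain ⟨M, hM⟩ := hfb
  have hfx : 0 < f x := hfpos x
  have hM0 : 0 < M := lt_of_lt_of_le hfx (hM x)
  have hd1 : 1 ≤ d := le_trans one_le_two hd
  have hd0 : (0:ℝ) < d := by exact_mod_cast lt_of_lt_of_le Nat.zero_lt_two hd
  -- basic facts about w
  have hwC : ∀ t, 0 ≤ t → ContinuousAt w t := fun t ht => (hder t ht).continuousAt
  have hwmono : MonotoneOn w (Set.Ici 0) := by
    apply StrictMonoOn.monotoneOn
    apply strictMonoOn_of_deriv_pos (convex_Ici 0)
    · exact fun t ht => (hwC t ht).continuousWithinAt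
    · intro t ht
      rw [interior_Ici] at ht
      rw [(hder t (le_of_lt ht)).deriv]
      exact hw'pos t (le_of_lt ht)
  have hte : ∀ t : ℝ, 0 ≤ t → t * Real.exp (-t) ≤ 1 := by
    intro t ht
    have h1 : t ≤ Real.exp t := by linarith [Real.add_one_le_exp t, Real.exp_nonneg t]
    calc t * Real.exp (-t) ≤ Real.exp t * Real.exp (-t) :=
          mul_le_mul_of_nonneg_right h1 (Real.exp_nonneg _)
      _ = 1 := by rw [← Real.exp_add]; simp
  -- continuity of t ↦ w (t ^ θ) type functions on Ioi 0
  have hcw : ContinuousOn (fun s : ℝ => w (s ^ θ)) (Set.Ioi 0) := by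
    intro s hs
    have h2 : ContinuousAt (fun s : ℝ => s ^ θ) s :=
      Real.continuousAt_rpow_const _ _ (Or.inl (ne_of_gt hs))
    have h3 : ContinuousAt (fun s : ℝ => w (s ^ θ)) s :=
      ContinuousAt.comp (g := w) (hwC _ (Real.rpow_nonneg (le_of_lt hs) _)) h2
    exact h3.continuousWithinAt
  have hconts : ContinuousOn (fun s : ℝ => s ^ (d - 1) * Real.exp (-(w (s ^ θ)))) (Set.Ioi 0) :=
    (continuous_pow (d-1)).continuousOn.mul (Real.continuous_exp.comp_continuousOn hcw.neg)
  -- integrability of the two profile functions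
  have hintJ : IntegrableOn
      (fun s : ℝ => s ^ (d - 1) * (w (s ^ θ) * Real.exp (-(w (s ^ θ))))) (Set.Ioi 0) := by
    simpa only [mul_assoc] using hint
  have hintE : IntegrableOn
      (fun s : ℝ => s ^ (d - 1) * Real.exp (-(w (s ^ θ)))) (Set.Ioi 0) := by
    obtain ⟨T₁, hT₁⟩ := eventually_atTop.1 (hwlim.eventually_ge_atTop 1)
    have hmax : (0:ℝ) < max T₁ 1 := lt_of_lt_of_le one_pos (le_max_right _ _)
    set T : ℝ := (max T₁ 1) ^ θ⁻¹ with hT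
    have hT0 : 0 < T := Real.rpow_pos_of_pos hmax _
    have hTw : ∀ s : ℝ, T ≤ s → 1 ≤ w (s ^ θ) := by
      intro s hTs
      apply hT₁
      calc T₁ ≤ max T₁ 1 := le_max_left _ _
        _ = T ^ θ := by
            rw [hT, ← Real.rpow_mul hmax.le, inv_mul_cancel₀ hθ.ne', Real.rpow_one]
        _ ≤ s ^ θ := Real.rpow_le_rpow hT0.le hTs hθ.le
    rw [← Set.Ioc_union_Ioi_eq_Ioi hT0.le]
    apply IntegrableOn.union
    · have hbd : ∀ᵐ s ∂(volume.restrict (Set.Ioc (0:ℝ) T)),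
          ‖s ^ (d - 1) * Real.exp (-(w (s ^ θ)))‖ ≤ T ^ (d - 1) := by
        rw [ae_restrict_iff' measurableSet_Ioc]
        apply Eventually.of_forall
        intro s hs
        have hs0 : 0 < s := hs.1
        have he1 : Real.exp (-(w (s ^ θ))) ≤ 1 := by
          rw [← Real.exp_zero]
          exact Real.exp_le_exp.2 (neg_nonpos.2 (hwnn _ (Real.rpow_nonneg hs0.le _)))
        rw [Real.norm_eq_abs,
          abs_of_nonneg (mul_nonneg (pow_nonneg hs0.le _) (Real.exp_nonneg _))]
        calc s ^ (d - 1) * Real.exp (-(w (s ^ θ))) ≤ s ^ (d - 1) * 1 :=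
              mul_le_mul_of_nonneg_left he1 (pow_nonneg hs0.le _)
          _ ≤ T ^ (d - 1) := by rw [mul_one]; exact pow_le_pow_left₀ hs0.le hs.2 _
      have hcst : IntegrableOn (fun _ : ℝ => T ^ (d - 1)) (Set.Ioc (0:ℝ) T) :=
        integrableOn_const measure_Ioc_lt_top.ne
      exact Integrable.mono' hcst
        ((hconts.mono Set.Ioc_subset_Ioi_self).aestronglyMeasurable measurableSet_Ioc) hbd
    · have hbd : ∀ᵐ s ∂(volume.restrict (Set.Ioi T)),
          ‖s ^ (d - 1) * Real.exp (-(w (s ^ θ)))‖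
            ≤ s ^ (d - 1) * (w (s ^ θ) * Real.exp (-(w (s ^ θ)))) := by
        rw [ae_restrict_iff' measurableSet_Ioi]
        apply Eventually.of_forall
        intro s hs
        have hs0 : 0 < s := lt_trans hT0 hs
        rw [Real.norm_eq_abs,
          abs_of_nonneg (mul_nonneg (pow_nonneg hs0.le _) (Real.exp_nonneg _))]
        apply mul_le_mul_of_nonneg_left _ (pow_nonneg hs0.le _ : (0:ℝ) ≤ s ^ (d - 1))
        exact le_mul_of_one_le_left (Real.exp_nonneg _) (hTw s (le_of_lt hs))
      exact Integrable.mono' (hintJ.mono_set (Set.Ioi_subset_Ioi hT0.le))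
        ((hconts.mono (Set.Ioi_subset_Ioi hT0.le)).aestronglyMeasurable measurableSet_Ioi) hbd
  -- positivity of the profile constants
  set cE : ℝ := ∫ s in Set.Ioi (0:ℝ), s ^ (d - 1) * Real.exp (-(w (s ^ θ))) with hcEdef
  set cJ : ℝ := ∫ s in Set.Ioi (0:ℝ), s ^ (d - 1) * (w (s ^ θ) * Real.exp (-(w (s ^ θ)))) with hcJdef
  have hcE : 0 < cE := by
    rw [hcEdef, integral_pos_iff_support_of_nonneg_ae _ hintE]
    · have hsub : Set.Ioi (0:ℝ) ⊆ Function.support (fun s => s ^ (d-1) * Real.exp (-(w (s ^ θ)))) := by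
        intro s hs
        exact ne_of_gt (mul_pos (pow_pos hs _) (Real.exp_pos _))
      refine lt_of_lt_of_le ?_ (measure_mono hsub)
      rw [Measure.restrict_apply measurableSet_Ioi, Set.inter_self, Real.volume_Ioi]
      norm_num
    · filter_upwards [ae_restrict_mem measurableSet_Ioi] with s hs
      exact mul_nonneg (pow_nonneg hs.out.le _) (Real.exp_nonneg _)
  have hcJ : 0 ≤ cJ := by
    rw [hcJdef]
    apply setIntegral_nonneg measurableSet_Ioi
    intro s hs
    exact mul_nonneg (pow_nonneg (le_of_lt hs) _)
      (mul_nonneg (hwnn _ (Real.rpow_nonneg (le_of_lt hs) _)) (Real.exp_nonneg _))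
  -- volume of the unit ball
  set ω : ℝ := (volume (ball (0 : EuclideanSpace ℝ (Fin d)) 1)).toReal with hωdef
  have hω : 0 < ω := by
    rw [hωdef]
    exact ENNReal.toReal_pos (ne_of_gt (measure_ball_pos _ _ one_pos)) measure_ball_lt_top.ne
  -- continuity of f at x
  obtain ⟨δ', hδ'0, hδ'⟩ := Metric.continuousAt_iff.1 hfc.continuousAt (f x / 2) (half_pos hfx)
  set δ : ℝ := δ' / 2 with hδdef
  have hδ0 : 0 < δ := half_pos hδ'0
  have hδf : ∀ y, dist y x ≤ δ → f x / 2 ≤ f y := by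
    intro y hy
    have h1 : dist (f y) (f x) < f x / 2 := hδ' (lt_of_le_of_lt hy (half_lt_self hδ'0))
    rw [Real.dist_eq] at h1
    have h2 := (abs_lt.1 h1).1
    linarith
  -- constants
  set c₁ : ℝ := M * ((d:ℝ) * ω * cE) with hc₁def
  set c₂ : ℝ := Real.exp (-(w 1)) * ((f x / 2) * ω) with hc₂def
  set c₃ : ℝ := M * ((d:ℝ) * ω * cJ) with hc₃def
  have hc₁ : 0 < c₁ := mul_pos hM0 (mul_pos (mul_pos hd0 hω) hcE)
  have hc₂ : 0 < c₂ := mul_pos (Real.exp_pos _) (mul_pos (half_pos hfx) hω)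
  have hc₃nn : 0 ≤ c₃ := mul_nonneg hM0.le (mul_nonneg (mul_nonneg hd0.le hω.le) hcJ)
  set B : ℝ := c₃ / c₂ + Real.log c₁ - Real.log (f x) with hBdef
  refine ⟨(d:ℝ)/(2*θ), div_pos hd0 (by linarith),
    max (max (Real.exp ((2*θ/(d:ℝ)) * B)) ((2/δ) ^ θ)) 1, fun σ hσ => ?_⟩
  have hσ1 : (1:ℝ) ≤ σ := le_trans (le_max_right _ _) hσ
  have hσ0 : (0:ℝ) < σ := lt_of_lt_of_le one_pos hσ1
  set sp : ℝ := σ ^ (-((d:ℝ)/θ)) with hspdef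
  have hsp0 : 0 < sp := Real.rpow_pos_of_pos hσ0 _
  set r : ℝ := σ ^ (-θ⁻¹) with hrdef
  have hr0 : 0 < r := Real.rpow_pos_of_pos hσ0 _
  have hrd : r ^ d = sp := by
    rw [hrdef, hspdef, ← Real.rpow_natCast (σ ^ (-θ⁻¹)) d, ← Real.rpow_mul hσ0.le]
    congr 1
    rw [neg_mul, inv_mul_eq_div]
  have hrθ : σ * r ^ θ = 1 := radial_subst_aux hθ hσ0
  have hrδ : r ≤ δ := by
    have h1 : (2/δ) ^ θ ≤ σ := le_trans (le_trans (le_max_right _ _) (le_max_left _ _)) hσ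
    have h2δ : (0:ℝ) < 2/δ := div_pos two_pos hδ0
    have h2 : σ ^ (-θ⁻¹) ≤ ((2/δ) ^ θ) ^ (-θ⁻¹) := by
      apply Real.rpow_le_rpow_of_nonpos (Real.rpow_pos_of_pos h2δ _) h1
      simp [le_of_lt (inv_pos.2 hθ)]
    have h3 : ((2/δ) ^ θ) ^ (-θ⁻¹) = δ/2 := by
      rw [← Real.rpow_mul h2δ.le, mul_neg, mul_inv_cancel₀ hθ.ne', Real.rpow_neg_one, inv_div]
    rw [hrdef]
    calc σ ^ (-θ⁻¹) ≤ δ/2 := h3 ▸ h2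
      _ ≤ δ := by linarith
  -- per-σ kernel facts
  have harg : ∀ x' : EuclideanSpace ℝ (Fin d), 0 ≤ σ * ‖x - x'‖ ^ θ :=
    fun x' => mul_nonneg hσ0.le (Real.rpow_nonneg (norm_nonneg _) _)
  have hwarg : Continuous (fun x' : EuclideanSpace ℝ (Fin d) => w (σ * ‖x - x'‖ ^ θ)) := by
    have h1 : Continuous (fun x' : EuclideanSpace ℝ (Fin d) => σ * ‖x - x'‖ ^ θ) := by
      apply continuous_const.mul
      rw [continuous_iff_continuousAt]
      intro y
      exact ContinuousAt.comp (g := fun t : ℝ => t ^ θ)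
        (Real.continuousAt_rpow_const _ _ (Or.inr hθ.le))
        ((continuous_const.sub continuous_id).norm.continuousAt)
    rw [continuous_iff_continuousAt]
    intro x'
    exact ContinuousAt.comp (g := w) (hwC _ (harg x')) h1.continuousAt
  have hKc : Continuous (fun x' : EuclideanSpace ℝ (Fin d) =>
      Real.exp (-(w (σ * ‖x - x'‖ ^ θ)))) := Real.continuous_exp.comp hwarg.neg
  have hKpos : ∀ x' : EuclideanSpace ℝ (Fin d),
      0 < Real.exp (-(w (σ * ‖x - x'‖ ^ θ))) := fun _ => Real.exp_pos _
  have hK1 : ∀ x' : EuclideanSpace ℝ (Fin d), Real.exp (-(w (σ * ‖x - x'‖ ^ θ))) ≤ 1 := by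
    intro x'
    rw [← Real.exp_zero]
    exact Real.exp_le_exp.2 (neg_nonpos.2 (hwnn _ (harg x')))
  have hKint : Integrable (fun x' => Real.exp (-(w (σ * ‖x - x'‖ ^ θ)))) μ := by
    apply Integrable.mono' (integrable_const (1:ℝ)) hKc.aestronglyMeasurable
    exact Eventually.of_forall fun x' => by
      rw [Real.norm_eq_abs, abs_of_pos (hKpos x')]; exact hK1 x'
  have hWKint : Integrable
      (fun x' => w (σ * ‖x - x'‖ ^ θ) * Real.exp (-(w (σ * ‖x - x'‖ ^ θ)))) μ := by
    apply Integrable.mono' (integrable_const (1:ℝ))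
      (hwarg.mul hKc).aestronglyMeasurable
    apply Eventually.of_forall
    intro x'
    rw [Real.norm_eq_abs, Pi.mul_apply, abs_of_nonneg (mul_nonneg (hwnn _ (harg x')) (Real.exp_nonneg _))]
    exact hte _ (hwnn _ (harg x'))
  -- conversion of μ-integrals to volume integrals
  have hμint : ∀ g : EuclideanSpace ℝ (Fin d) → ℝ, (∫ y, g y ∂μ) = ∫ y, f y * g y := by
    intro g
    rw [hμ]
    have h1 : (∫ y, g y ∂(volume.withDensity fun y => ENNReal.ofReal (f y)))
        = ∫ y, Real.toNNReal (f y) • g y :=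
      integral_withDensity_eq_integral_smul (hfc.measurable.real_toNNReal) g
    rw [h1]
    congr 1
    funext y
    rw [NNReal.smul_def, Real.coe_toNNReal _ (hfpos y).le, smul_eq_mul]
  -- generic upper bound
  have hgen : ∀ φ : ℝ → ℝ, (∀ u, 0 ≤ u → 0 ≤ φ u) →
      IntegrableOn (fun s => s ^ (d-1) * φ (s ^ θ)) (Set.Ioi 0) →
      (∫ x', φ (σ * ‖x - x'‖ ^ θ) ∂μ) ≤
        M * ((d:ℝ) * ω * (sp * ∫ s in Set.Ioi (0:ℝ), s ^ (d-1) * φ (s ^ θ))) := by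
    intro φ hφnn hφint
    have hrad : Integrable (fun y : EuclideanSpace ℝ (Fin d) => φ (σ * ‖y‖ ^ θ)) :=
      integrable_radial d hd1 (fun t => φ (σ * t ^ θ))
        (radial_subst_integrable d hθ hσ0 φ hφint)
    have htrans : Integrable (fun y : EuclideanSpace ℝ (Fin d) => φ (σ * ‖x - y‖ ^ θ)) :=
      hrad.comp_sub_left x
    rw [hμint]
    have step1 : (∫ y, f y * φ (σ * ‖x - y‖ ^ θ)) ≤ ∫ y, M * φ (σ * ‖x - y‖ ^ θ) := by
      apply integral_mono_of_nonneg
      · exact Eventually.of_forall fun y => mul_nonneg (hfpos y).le (hφnn _ (harg y))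
      · exact htrans.const_mul M
      · exact Eventually.of_forall fun y => mul_le_mul_of_nonneg_right (hM y) (hφnn _ (harg y))
    calc (∫ y, f y * φ (σ * ‖x - y‖ ^ θ)) ≤ ∫ y, M * φ (σ * ‖x - y‖ ^ θ) := step1
      _ = M * ∫ y, φ (σ * ‖x - y‖ ^ θ) := integral_const_mul _ _
      _ = M * ∫ y, φ (σ * ‖y‖ ^ θ) := by
          rw [integral_sub_left_eq_self (fun y : EuclideanSpace ℝ (Fin d) =>
            φ (σ * ‖y‖ ^ θ)) volume x]
      _ = M * ((d:ℝ) * ω * ∫ rr in Set.Ioi (0:ℝ), rr ^ (d-1) * φ (σ * rr ^ θ)) := by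
          rw [polar_eq d hd1 (fun t => φ (σ * t ^ θ)), ← hωdef]
      _ = M * ((d:ℝ) * ω * (sp * ∫ s in Set.Ioi (0:ℝ), s ^ (d-1) * φ (s ^ θ))) := by
          rw [radial_subst d hd1 hθ hσ0 φ, ← hspdef]
  -- the two integrals
  set I : ℝ := ∫ x', Real.exp (-(w (σ * ‖x - x'‖ ^ θ))) ∂μ with hIdef
  set J : ℝ := ∫ x', w (σ * ‖x - x'‖ ^ θ) * Real.exp (-(w (σ * ‖x - x'‖ ^ θ))) ∂μ with hJdef
  -- upper bounds
  have hIu : I ≤ c₁ * sp := by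
    calc I ≤ M * ((d:ℝ) * ω * (sp * cE)) := by
          rw [hIdef]
          exact hgen (fun u => Real.exp (-(w u))) (fun u hu => Real.exp_nonneg _) hintE
      _ = c₁ * sp := by rw [hc₁def]; ring
  have hJu : J ≤ c₃ * sp := by
    calc J ≤ M * ((d:ℝ) * ω * (sp * cJ)) := by
          rw [hJdef]
          exact hgen (fun u => w u * Real.exp (-(w u))) (fun u hu => mul_nonneg (hwnn u hu) (Real.exp_nonneg _)) hintJ
      _ = c₃ * sp := by rw [hc₃def]; ring
  have hJnn : 0 ≤ J := by
    rw [hJdef]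
    exact integral_nonneg fun x' => mul_nonneg (hwnn _ (harg x')) (Real.exp_nonneg _)
  -- lower bound for I
  have hclose : ∀ y ∈ Metric.closedBall x r,
      Real.exp (-(w 1)) ≤ Real.exp (-(w (σ * ‖x - y‖ ^ θ))) := by
    intro y hy
    apply Real.exp_le_exp.2
    apply neg_le_neg
    apply hwmono (harg y) (by norm_num : (1:ℝ) ∈ Set.Ici 0)
    have h1 : ‖x - y‖ ≤ r := by
      rw [← dist_eq_norm, dist_comm]
      exact mem_closedBall.1 hy
    have h2 : ‖x - y‖ ^ θ ≤ r ^ θ := Real.rpow_le_rpow (norm_nonneg _) h1 hθ.le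
    calc σ * ‖x - y‖ ^ θ ≤ σ * r ^ θ := mul_le_mul_of_nonneg_left h2 hσ0.le
      _ = 1 := hrθ
  have hμball : (f x / 2) * (r ^ d * ω) ≤ (μ (Metric.closedBall x r)).toReal := by
    have h1 : ENNReal.ofReal (f x / 2) * volume (Metric.closedBall x r)
        ≤ μ (Metric.closedBall x r) := by
      rw [hμ, withDensity_apply _ measurableSet_closedBall]
      calc ENNReal.ofReal (f x/2) * volume (Metric.closedBall x r)
          = ∫⁻ _ in Metric.closedBall x r, ENNReal.ofReal (f x / 2) ∂volume := by
            rw [setLIntegral_const]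
        _ ≤ ∫⁻ y in Metric.closedBall x r, ENNReal.ofReal (f y) ∂volume := by
            apply setLIntegral_mono (hfc.measurable.ennreal_ofReal)
            intro y hy
            exact ENNReal.ofReal_le_ofReal
              (hδf y (le_trans (mem_closedBall.1 hy) hrδ))
    have h2 := (ENNReal.toReal_le_toReal
      (ENNReal.mul_ne_top ENNReal.ofReal_ne_top measure_closedBall_lt_top.ne)
      (measure_ne_top μ _)).2 h1
    rw [ENNReal.toReal_mul, ENNReal.toReal_ofReal (half_pos hfx).le] at h2
    have h3 : (volume (Metric.closedBall x r)).toReal = r ^ d * ω := by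
      rw [Measure.addHaar_closedBall _ _ hr0.le, ENNReal.toReal_mul,
        ENNReal.toReal_ofReal (pow_nonneg hr0.le _), finrank_euclideanSpace_fin, ← hωdef]
    rw [← h3]
    exact h2
  have hIl : c₂ * sp ≤ I := by
    have hmain : Real.exp (-(w 1)) * ((f x / 2) * (r ^ d * ω)) ≤ I := by
      calc Real.exp (-(w 1)) * ((f x / 2) * (r ^ d * ω))
          ≤ Real.exp (-(w 1)) * (μ (Metric.closedBall x r)).toReal :=
            mul_le_mul_of_nonneg_left hμball (Real.exp_nonneg _)
        _ ≤ ∫ x' in Metric.closedBall x r, Real.exp (-(w (σ * ‖x - x'‖ ^ θ))) ∂μ :=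
            setIntegral_ge_of_const_le_real measurableSet_closedBall (measure_ne_top μ _)
              hclose hKint.integrableOn
        _ ≤ I := by
            rw [hIdef]
            exact setIntegral_le_integral hKint
              (Eventually.of_forall fun y => (hKpos y).le)
    calc c₂ * sp = Real.exp (-(w 1)) * ((f x / 2) * (r ^ d * ω)) := by
          rw [hc₂def, ← hrd]; ring
      _ ≤ I := hmain
  have hIpos : 0 < I := lt_of_lt_of_le (mul_pos hc₂ hsp0) hIl
  -- the entropy identity
  have hident : entropyF w θ ρ μ x σ = -(J / I) - Real.log I + Real.log ρ := by
    simp only [entropyF, inputKernel]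
    rw [← hIdef]
    have hcongr : (fun x' => (Real.exp (-(w (σ * ‖x - x'‖ ^ θ))) / I) *
        Real.log (Real.exp (-(w (σ * ‖x - x'‖ ^ θ))) / I))
        = fun x' => (-(1/I)) * (w (σ * ‖x - x'‖ ^ θ) * Real.exp (-(w (σ * ‖x - x'‖ ^ θ))))
          - (Real.log I / I) * Real.exp (-(w (σ * ‖x - x'‖ ^ θ))) := by
      funext x'
      rw [Real.log_div (Real.exp_ne_zero _) hIpos.ne', Real.log_exp]
      ring
    rw [hcongr, integral_sub (hWKint.const_mul _) (hKint.const_mul _),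
      integral_const_mul, integral_const_mul, ← hJdef, ← hIdef]
    rw [div_mul_cancel₀ _ hIpos.ne']
    ring
  -- final assembly
  rw [hident]
  have hJI : J / I ≤ c₃ / c₂ := by
    calc J / I ≤ (c₃ * sp) / (c₂ * sp) :=
          div_le_div₀ (mul_nonneg hc₃nn hsp0.le) hJu (mul_pos hc₂ hsp0) hIl
      _ = c₃ / c₂ := mul_div_mul_right _ _ hsp0.ne'
  have hlogI : Real.log I ≤ Real.log c₁ - ((d:ℝ)/θ) * Real.log σ := by
    calc Real.log I ≤ Real.log (c₁ * sp) :=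
          (Real.log_le_log_iff hIpos (mul_pos hc₁ hsp0)).2 hIu
      _ = Real.log c₁ + Real.log sp := Real.log_mul hc₁.ne' hsp0.ne'
      _ = Real.log c₁ - ((d:ℝ)/θ) * Real.log σ := by
          rw [hspdef, Real.log_rpow hσ0]; ring
  have hB : B ≤ (d:ℝ)/(2*θ) * Real.log σ := by
    have h2 : (2*θ/(d:ℝ)) * B ≤ Real.log σ := by
      have h3 : Real.exp ((2*θ/(d:ℝ)) * B) ≤ σ :=
        le_trans (le_trans (le_max_left _ _) (le_max_left _ _)) hσ
      calc (2*θ/(d:ℝ)) * B = Real.log (Real.exp ((2*θ/(d:ℝ)) * B)) := (Real.log_exp _).symm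
        _ ≤ Real.log σ := (Real.log_le_log_iff (Real.exp_pos _) hσ0).2 h3
    have h4 := mul_le_mul_of_nonneg_left h2 (le_of_lt (div_pos hd0 (by linarith) : (0:ℝ) < (d:ℝ)/(2*θ)))
    have hdne : (d:ℝ) ≠ 0 := hd0.ne'
    have hθne : θ ≠ 0 := hθ.ne'
    calc B = (d:ℝ)/(2*θ) * ((2*θ/(d:ℝ)) * B) := by field_simp
      _ ≤ (d:ℝ)/(2*θ) * Real.log σ := h4
  have hhalf : ((d:ℝ)/θ) * Real.log σ
      = (d:ℝ)/(2*θ) * Real.log σ + (d:ℝ)/(2*θ) * Real.log σ := by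
    have hθne : θ ≠ 0 := hθ.ne'
    field_simp
    ring
  rw [hBdef] at hB
  linarith [hJI, hlogI, hB, hhalf]
end
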